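/- The point y⁽³⁾=(−a^{−1/2},−a^{−1/2}) lies on the ellipse E and ∇e(y⁽³⁾) is a nonzero scalar multiple of (1,0). Moreover, there is a unique point y⁽²⁾ of E with y₂-coordinate negative satisfying y₃⁽²⁾=((a+b)/b)·y₂⁽²⁾; this point lies in the open quadrant {y₂<0, y₃<0}, and ∇e(y⁽²⁾) is a nonzero scalar multiple of (0,1). -/

import Mathlib

noncomputable section

/-- The quadratic form `e(y₂,y₃) = a·y₂² + b·(y₂−y₃)²` defining the ellipse. -/
def eF (a b : ℝ) (y : ℝ × ℝ) : ℝ := a * y.1 ^ 2 + b * (y.1 - y.2) ^ 2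

/-- The gradient of `eF`. -/
def gradE (a b : ℝ) (y : ℝ × ℝ) : ℝ × ℝ :=
  (2 * a * y.1 + 2 * b * (y.1 - y.2), -(2 * b * (y.1 - y.2)))

/-- Euclidean inner product on `ℝ × ℝ`. -/
def dotp (u v : ℝ × ℝ) : ℝ := u.1 * v.1 + u.2 * v.2

/-- Euclidean norm on `ℝ × ℝ`. -/
def enorm2 (v : ℝ × ℝ) : ℝ := Real.sqrt (v.1 ^ 2 + v.2 ^ 2)

/-- `T` is a point of the ellipse in the open quadrant `{y₂<0, y₃<0}` where the
gradient of `e` is a positive multiple of `(−Δ, 1)`. -/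
def IsT3 (a b Δ : ℝ) (T : ℝ × ℝ) : Prop :=
  eF a b T = 1 ∧ T.1 < 0 ∧ T.2 < 0 ∧ ∃ c > 0, gradE a b T = c • ((-Δ, 1) : ℝ × ℝ)

/-- `T` is a point of the ellipse with `y₃ < 0` where the gradient of `e`
is a positive multiple of `(1, −Δ)`. -/
def IsT2 (a b Δ : ℝ) (T : ℝ × ℝ) : Prop :=
  eF a b T = 1 ∧ T.2 < 0 ∧ ∃ c > 0, gradE a b T = c • ((1, -Δ) : ℝ × ℝ)

/-- The configuration of the tangency points `T₂, T₃` and of the intercepts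
`K₂ = (u₂,0)`, `K₃ = (0,u₃)` of the corresponding tangent lines with the axes. -/
def GoodConfig (a b Δ u₂ u₃ : ℝ) (T₂ T₃ : ℝ × ℝ) : Prop :=
  IsT2 a b Δ T₂ ∧ IsT3 a b Δ T₃ ∧ 0 < u₂ ∧ 0 < u₃ ∧
  dotp (gradE a b T₂) (((u₂, 0) : ℝ × ℝ) - T₂) = 0 ∧
  dotp (gradE a b T₃) (((0, u₃) : ℝ × ℝ) - T₃) = 0

/-- The closed arc of the ellipse from `T₂` to `T₃` passing through
`(−a^{−1/2}, −a^{−1/2})`: the points of the ellipse whose outward normal direction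
lies in the closed convex cone spanned by `(1, −Δ)` (normal at `T₂`) and
`(−Δ, 1)` (normal at `T₃`). -/
def arcE (a b Δ : ℝ) : Set (ℝ × ℝ) :=
  {y | eF a b y = 1 ∧ ∃ c₂ c₃ : ℝ, 0 ≤ c₂ ∧ 0 ≤ c₃ ∧
    gradE a b y = c₂ • ((1, -Δ) : ℝ × ℝ) + c₃ • ((-Δ, 1) : ℝ × ℝ)}

/-- The closed contour `L`: segment `K₃K₂`, segment `K₂T₂`, the arc of the ellipse
from `T₂` to `T₃` through `(−a^{−1/2},−a^{−1/2})`, and segment `T₃K₃`. -/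
def contourL (a b Δ u₂ u₃ : ℝ) (T₂ T₃ : ℝ × ℝ) : Set (ℝ × ℝ) :=
  segment ℝ ((0, u₃) : ℝ × ℝ) ((u₂, 0) : ℝ × ℝ) ∪
    segment ℝ ((u₂, 0) : ℝ × ℝ) T₂ ∪ arcE a b Δ ∪
    segment ℝ T₃ ((0, u₃) : ℝ × ℝ)

/-- `φ` is the homogeneous functional associated with the contour `L`:
`φ(0) = 0` and, for `y ≠ 0`, `φ(y)` is positive with `y/φ(y) ∈ L`. -/
def IsPhi (L : Set (ℝ × ℝ)) (φ : ℝ × ℝ → ℝ) : Prop :=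
  φ 0 = 0 ∧ ∀ y : ℝ × ℝ, y ≠ 0 → 0 < φ y ∧ (φ y)⁻¹ • y ∈ L

/-- `n` is the outward unit normal field of the contour `L` (defined except at
`K₂` and `K₃`): on the elliptic arc it is `∇e(y)/‖∇e(y)‖`, and it is constant on
each of the three straight pieces, equal to `n(T₂)` on `(K₂,T₂]`, to `n(T₃)` on
`[T₃,K₃)`, and to the normalized `(u₂⁻¹, u₃⁻¹)` on `(K₃,K₂)`. -/
def IsN (a b Δ u₂ u₃ : ℝ) (T₂ T₃ : ℝ × ℝ) (n : ℝ × ℝ → ℝ × ℝ) : Prop :=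
  (∀ y ∈ arcE a b Δ, n y = (enorm2 (gradE a b y))⁻¹ • gradE a b y) ∧
  (∀ y ∈ segment ℝ ((u₂, 0) : ℝ × ℝ) T₂, y ≠ ((u₂, 0) : ℝ × ℝ) → n y = n T₂) ∧
  (∀ y ∈ segment ℝ T₃ ((0, u₃) : ℝ × ℝ), y ≠ ((0, u₃) : ℝ × ℝ) → n y = n T₃) ∧
  (∀ y ∈ segment ℝ ((0, u₃) : ℝ × ℝ) ((u₂, 0) : ℝ × ℝ),
    y ≠ ((0, u₃) : ℝ × ℝ) → y ≠ ((u₂, 0) : ℝ × ℝ) →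
    n y = (enorm2 ((u₂⁻¹, u₃⁻¹) : ℝ × ℝ))⁻¹ • ((u₂⁻¹, u₃⁻¹) : ℝ × ℝ))

/-- the point `y⁽³⁾ = (−a^{−1/2}, −a^{−1/2})` lies on the ellipse and the
gradient of `e` there is a nonzero multiple of `(1,0)`; moreover there is a unique point
`y⁽²⁾` of the ellipse with negative `y₂`-coordinate and `y₃ = ((a+b)/b)·y₂`; it lies in
the open quadrant `{y₂<0, y₃<0}` and the gradient of `e` there is a nonzero multiple
of `(0,1)`. -/
theorem stmt1 (a b : ℝ) (ha : 0 < a) (hb : 0 < b) :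
    eF a b ((-(Real.sqrt a)⁻¹, -(Real.sqrt a)⁻¹) : ℝ × ℝ) = 1 ∧
    (∃ c : ℝ, c ≠ 0 ∧
      gradE a b ((-(Real.sqrt a)⁻¹, -(Real.sqrt a)⁻¹) : ℝ × ℝ) = c • ((1, 0) : ℝ × ℝ)) ∧
    ∃ y : ℝ × ℝ,
      (eF a b y = 1 ∧ y.1 < 0 ∧ y.2 = ((a + b) / b) * y.1) ∧
      (∀ y' : ℝ × ℝ, (eF a b y' = 1 ∧ y'.1 < 0 ∧ y'.2 = ((a + b) / b) * y'.1) → y' = y) ∧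
      y.1 < 0 ∧ y.2 < 0 ∧ ∃ c : ℝ, c ≠ 0 ∧ gradE a b y = c • ((0, 1) : ℝ × ℝ) := by
  have hsa : (0:ℝ) < Real.sqrt a := Real.sqrt_pos.mpr ha
  have hsa2 : Real.sqrt a ^ 2 = a := Real.sq_sqrt ha.le
  have hab : 0 < a + b := by linarith
  set t : ℝ := -Real.sqrt (b / (a * (a + b))) with ht
  have htpos : 0 < Real.sqrt (b / (a * (a + b))) :=
    Real.sqrt_pos.mpr (by positivity)
  have htneg : t < 0 := by rw [ht]; exact neg_lt_zero.mpr htpos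
  have ht2 : t ^ 2 = b / (a * (a + b)) := by
    rw [ht, neg_pow]; simp [Real.sq_sqrt (show (0:ℝ) ≤ b / (a*(a+b)) by positivity)]
  have key : ∀ s : ℝ, eF a b (s, ((a+b)/b) * s) = (a * (a + b) / b) * s ^ 2 := by
    intro s
    have hb' : b ≠ 0 := hb.ne'
    simp only [eF]
    field_simp
    ring
  refine ⟨?_, ?_, ⟨(t, ((a+b)/b) * t), ⟨?_, htneg, rfl⟩, ?_, htneg, ?_, ?_⟩⟩
  · simp only [eF]
    field_simp
    rw [hsa2]; ring
  · refine ⟨-2 * Real.sqrt a, by positivity, ?_⟩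
    simp only [gradE, Prod.smul_mk, smul_eq_mul, Prod.mk.injEq]
    constructor
    · field_simp
      nlinarith [hsa2]
    · ring
  · rw [key, ht2]; field_simp
  · rintro ⟨s, u⟩ ⟨h1, h2, h3⟩
    simp only at h2 h3
    rw [h3] at h1 ⊢
    rw [key] at h1
    have hs2 : s ^ 2 = t ^ 2 := by
      rw [ht2]
      have : a * (a + b) / b ≠ 0 := by positivity
      field_simp at h1 ⊢
      nlinarith [h1]
    have : s = t := by nlinarith [sq_nonneg (s - t), sq_nonneg (s + t)]
    simp [this]
  · have : (a+b)/b > 0 := by positivity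
    simpa using mul_neg_of_pos_of_neg this htneg
  · refine ⟨2 * a * t, by nlinarith, ?_⟩
    simp only [gradE, Prod.smul_mk, smul_eq_mul, Prod.mk.injEq]
    constructor
    · field_simp; ring
    · field_simp; ring
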